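/- Let r ∈ ℝ with |r| < 1 and let k, j be natural numbers. Then ∫_{ℝ×ℝ} He_k(x) · He_j(y) · (2π·√(1−r²))⁻¹ · exp(−(x² − 2rxy + y²)/(2(1−r²))) dx dy equals k! · r^k if k = j, and equals 0 if k ≠ j. -/

import Mathlib

open Real

open Polynomial MeasureTheory Filter

lemma integrable_pow_gauss {b : ℝ} (hb : 0 < b) (n : ℕ) :
    Integrable fun x : ℝ => x ^ n * Real.exp (-b * x ^ 2) := by
  have hb2 : 0 < b / 2 := by linarith
  refine Integrable.mono' (((integrable_exp_neg_mul_sq hb2).const_mul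
      ((n.factorial : ℝ) * Real.exp (1 / (2 * b))))) ?_ ?_
  · exact ((continuous_pow n).mul (by continuity)).aestronglyMeasurable
  · filter_upwards with x
    have h1 : |x| ^ n ≤ (n.factorial : ℝ) * Real.exp |x| := by
      have := Real.pow_div_factorial_le_exp (x := |x|) (abs_nonneg x) n
      have hf : (0:ℝ) < n.factorial := by positivity
      rw [div_le_iff₀ hf] at this
      linarith [this]
    have h2 : Real.exp |x| * Real.exp (-b * x ^ 2) ≤
        Real.exp (1 / (2 * b)) * Real.exp (-(b / 2) * x ^ 2) := by
      rw [← Real.exp_add, ← Real.exp_add]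
      apply Real.exp_le_exp.2
      have hx2 : x ^ 2 = |x| ^ 2 := (sq_abs x).symm
      rw [hx2, ← sub_nonneg]
      generalize |x| = t
      have : 1 / (2 * b) + -(b / 2) * t ^ 2 - (t + -b * t ^ 2)
          = (b * t - 1) ^ 2 / (2 * b) := by
        field_simp
        ring
      rw [this]
      positivity
    calc ‖x ^ n * Real.exp (-b * x ^ 2)‖
        = |x| ^ n * Real.exp (-b * x ^ 2) := by
          rw [norm_mul, norm_pow, Real.norm_eq_abs, Real.norm_eq_abs,
            abs_of_pos (Real.exp_pos _)]
      _ ≤ ((n.factorial : ℝ) * Real.exp |x|) * Real.exp (-b * x ^ 2) :=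
          mul_le_mul_of_nonneg_right h1 (Real.exp_pos _).le
      _ = (n.factorial : ℝ) * (Real.exp |x| * Real.exp (-b * x ^ 2)) := by ring
      _ ≤ (n.factorial : ℝ) * (Real.exp (1 / (2 * b)) * Real.exp (-(b / 2) * x ^ 2)) :=
          mul_le_mul_of_nonneg_left h2 (by positivity)
      _ = (n.factorial : ℝ) * Real.exp (1 / (2 * b)) * Real.exp (-(b / 2) * x ^ 2) := by ring

lemma integrable_poly_gauss {b : ℝ} (hb : 0 < b) (p : ℝ[X]) :
    Integrable fun x : ℝ => p.eval x * Real.exp (-b * x ^ 2) := by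
  induction p using Polynomial.induction_on' with
  | add p q hp hq =>
      simpa [eval_add, add_mul] using hp.fun_add hq
  | monomial n a =>
      simpa [eval_monomial, mul_assoc] using (integrable_pow_gauss hb n).const_mul a

lemma integrable_poly_gaussian (p : ℝ[X]) :
    Integrable fun x : ℝ => p.eval x * Real.exp (-(x ^ 2 / 2)) := by
  have h : (fun x : ℝ => p.eval x * Real.exp (-(x ^ 2 / 2)))
      = fun x : ℝ => p.eval x * Real.exp (-(1/2 : ℝ) * x ^ 2) := by
    funext x; congr 1; ring
  rw [h]; exact integrable_poly_gauss (by norm_num) p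

noncomputable def Hp (n : ℕ) : ℝ[X] := (Polynomial.hermite n).map (algebraMap ℤ ℝ)

lemma Hp_zero : Hp 0 = 1 := by simp [Hp, hermite_zero]

lemma Hp_succ (n : ℕ) : Hp (n + 1) = X * Hp n - derivative (Hp n) := by
  simp [Hp, hermite_succ, Polynomial.derivative_map]

lemma aeval_hermite_eq (x : ℝ) (n : ℕ) :
    (Polynomial.aeval x (Polynomial.hermite n) : ℝ) = (Hp n).eval x := by
  rw [Hp, Polynomial.eval_map, Polynomial.aeval_def]

lemma derivative_Hp (n : ℕ) :
    derivative (Hp n) = C (n : ℝ) * Hp (n - 1) := by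
  induction n using Nat.strong_induction_on with
  | _ n ih =>
    match n with
    | 0 => simp [Hp_zero]
    | 1 => simp [Hp_succ, Hp_zero]
    | (m + 2) =>
      have ihm : derivative (Hp (m + 1)) = C ((m+1 : ℕ) : ℝ) * Hp m := by
        simpa using ih (m+1) (by omega)
      rw [Hp_succ (m+1), derivative_sub, derivative_mul, derivative_X, one_mul, ihm]
      rw [derivative_mul, derivative_C, zero_mul, zero_add]
      rw [show m + 2 - 1 = m + 1 from rfl, Hp_succ m]
      rw [show ((m+2:ℕ):ℝ) = ((m+1:ℕ):ℝ) + 1 by push_cast; ring, map_add, map_one]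
      ring

lemma gaussian_ibp (p : ℝ[X]) :
    ∫ x : ℝ, x * p.eval x * Real.exp (-(x ^ 2 / 2))
      = ∫ x : ℝ, (derivative p).eval x * Real.exp (-(x ^ 2 / 2)) := by
  set g : ℝ → ℝ := fun x => Real.exp (-(x ^ 2 / 2)) with hg
  have hgd : ∀ x : ℝ, HasDerivAt g (-x * g x) x := by
    intro x
    have h1 : HasDerivAt (fun y : ℝ => -(y ^ 2 / 2)) (-x) x := by
      simpa using ((hasDerivAt_pow 2 x).div_const 2).fun_neg
    simpa [hg, mul_comm] using h1.exp
  have hderiv : ∀ x : ℝ, HasDerivAt (fun x => p.eval x * g x)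
      ((derivative p).eval x * g x - x * p.eval x * g x) x := by
    intro x
    have := (p.hasDerivAt x).fun_mul (hgd x)
    refine this.congr_deriv ?_
    ring
  have hint : Integrable fun x : ℝ =>
      (derivative p).eval x * g x - x * p.eval x * g x := by
    refine (integrable_poly_gaussian (derivative p)).sub ?_
    have := integrable_poly_gaussian (X * p)
    simpa [eval_mul, mul_assoc] using this
  have h0 : ∫ x : ℝ, ((derivative p).eval x * g x - x * p.eval x * g x) = 0 :=
    integral_eq_zero_of_hasDerivAt_of_integrable hderiv hint (integrable_poly_gaussian p)
  have hx : Integrable fun x : ℝ => x * p.eval x * g x := by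
    have := integrable_poly_gaussian (X * p)
    simpa [eval_mul, mul_assoc] using this
  rw [integral_sub (integrable_poly_gaussian (derivative p)) hx] at h0
  linarith [h0]

lemma integral_gaussian_half : ∫ x : ℝ, Real.exp (-(x ^ 2 / 2)) = Real.sqrt (2 * π) := by
  have h : ∀ x : ℝ, -(x ^ 2 / 2) = -(1/2 : ℝ) * x ^ 2 := fun x => by ring
  simp_rw [h]
  rw [integral_gaussian (1/2 : ℝ), show π / (1/2 : ℝ) = 2 * π by ring]

lemma moment_Hp (n : ℕ) :
    ∫ x : ℝ, (Hp n).eval x * Real.exp (-(x ^ 2 / 2))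
      = if n = 0 then Real.sqrt (2 * π) else 0 := by
  induction n with
  | zero => simp [Hp_zero, integral_gaussian_half]
  | succ n ih =>
    rw [if_neg (Nat.succ_ne_zero n), Hp_succ]
    simp only [show ∀ x : ℝ, (X * Hp n - derivative (Hp n)).eval x * Real.exp (-(x ^ 2 / 2))
        = x * (Hp n).eval x * Real.exp (-(x ^ 2 / 2))
          - (derivative (Hp n)).eval x * Real.exp (-(x ^ 2 / 2)) from
      fun x => by simp [eval_mul]; ring]
    rw [integral_sub ?_ (integrable_poly_gaussian _), gaussian_ibp (Hp n), sub_self]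
    · have := integrable_poly_gaussian (X * Hp n)
      simpa [eval_mul, mul_assoc] using this

lemma orth_Hp (m : ℕ) : ∀ n : ℕ,
    ∫ x : ℝ, (Hp n).eval x * (Hp m).eval x * Real.exp (-(x ^ 2 / 2))
      = if n = m then (m.factorial : ℝ) * Real.sqrt (2 * π) else 0 := by
  induction m with
  | zero =>
    intro n
    simp only [Hp_zero, eval_one, mul_one, Nat.factorial_zero, Nat.cast_one, one_mul]
    exact moment_Hp n
  | succ m ih =>
    intro n
    rw [Hp_succ m]
    simp only [show ∀ x : ℝ, (Hp n).eval x * (X * Hp m - derivative (Hp m)).eval x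
          * Real.exp (-(x ^ 2 / 2))
        = x * (Hp n * Hp m).eval x * Real.exp (-(x ^ 2 / 2))
          - (Hp n * derivative (Hp m)).eval x * Real.exp (-(x ^ 2 / 2)) from
      fun x => by simp [eval_mul]; ring]
    have hxint : Integrable fun x : ℝ =>
        x * (Hp n * Hp m).eval x * Real.exp (-(x ^ 2 / 2)) := by
      have := integrable_poly_gaussian (X * (Hp n * Hp m))
      simpa [eval_mul, mul_assoc] using this
    rw [integral_sub hxint (integrable_poly_gaussian _), gaussian_ibp (Hp n * Hp m),
      derivative_mul]
    simp only [show ∀ x : ℝ, (derivative (Hp n) * Hp m + Hp n * derivative (Hp m)).eval x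
          * Real.exp (-(x ^ 2 / 2))
        = (derivative (Hp n) * Hp m).eval x * Real.exp (-(x ^ 2 / 2))
          + (Hp n * derivative (Hp m)).eval x * Real.exp (-(x ^ 2 / 2)) from
      fun x => by simp [eval_add]; ring]
    rw [integral_add (integrable_poly_gaussian _) (integrable_poly_gaussian _),
      add_sub_cancel_right]
    rw [derivative_Hp n]
    simp only [show ∀ x : ℝ, (C (n : ℝ) * Hp (n - 1) * Hp m).eval x * Real.exp (-(x ^ 2 / 2))
        = (n : ℝ) * ((Hp (n - 1)).eval x * (Hp m).eval x * Real.exp (-(x ^ 2 / 2))) from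
      fun x => by simp [eval_mul]; ring]
    rw [MeasureTheory.integral_const_mul, ih (n - 1)]
    match n with
    | 0 => simp
    | (k + 1) =>
      simp only [Nat.add_sub_cancel, Nat.succ_ne_zero, Nat.add_right_cancel_iff]
      by_cases hkm : k = m
      · subst hkm
        rw [if_pos rfl, if_pos rfl, Nat.factorial_succ]
        push_cast
        ring
      · rw [if_neg hkm, mul_zero, if_neg hkm]

lemma Hp_one : Hp 1 = X := by
  rw [Hp_succ 0, Hp_zero]; simp

lemma int_affine (q : ℝ[X]) (c d : ℝ) :
    Integrable fun z : ℝ => q.eval (c + d * z) * Real.exp (-(z ^ 2 / 2)) := by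
  have := integrable_poly_gaussian (q.comp (C c + C d * X))
  simpa [eval_comp] using this

lemma ibp_affine (q : ℝ[X]) (c d : ℝ) :
    ∫ z : ℝ, z * q.eval (c + d * z) * Real.exp (-(z ^ 2 / 2))
      = d * ∫ z : ℝ, (derivative q).eval (c + d * z) * Real.exp (-(z ^ 2 / 2)) := by
  have h1 := gaussian_ibp (q.comp (C c + C d * X))
  simp only [eval_comp, eval_add, eval_mul, eval_C, eval_X, derivative_comp,
    derivative_add, derivative_C, derivative_mul, derivative_X, zero_add, mul_one,
    mul_zero, add_zero, zero_mul] at h1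
  rw [h1, ← MeasureTheory.integral_const_mul]
  congr 1; funext z; ring

lemma affine_Hp {a b : ℝ} (hab : a ^ 2 + b ^ 2 = 1) (x : ℝ) : ∀ j : ℕ,
    ∫ z : ℝ, (Hp j).eval (a * x + b * z) * Real.exp (-(z ^ 2 / 2))
      = Real.sqrt (2 * π) * a ^ j * (Hp j).eval x := by
  intro j
  induction j using Nat.strong_induction_on with
  | _ j ih =>
    match j with
    | 0 => simp [Hp_zero, integral_gaussian_half]
    | 1 =>
      simp only [Hp_one, eval_X]
      have h1 : ∀ z : ℝ, (a * x + b * z) * Real.exp (-(z ^ 2 / 2))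
          = a * x * Real.exp (-(z ^ 2 / 2)) + b * (z * Real.exp (-(z ^ 2 / 2))) := by
        intro z; ring
      simp_rw [h1]
      have hz : Integrable (fun z : ℝ => z * Real.exp (-(z ^ 2 / 2))) := by
        have := integrable_poly_gaussian X
        simpa using this
      rw [integral_add ((integrable_poly_gaussian 1).const_mul (a*x) |>.congr ?_ ) (hz.const_mul b)]
      rotate_left
      · filter_upwards with z; simp
      rw [MeasureTheory.integral_const_mul, MeasureTheory.integral_const_mul,
        integral_gaussian_half]
      have hzero : ∫ z : ℝ, z * Real.exp (-(z ^ 2 / 2)) = 0 := by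
        have := gaussian_ibp 1
        simpa using this
      rw [hzero]
      ring
    | (m + 2) =>
      have ih1 := ih (m + 1) (by omega)
      have ih0 := ih m (by omega)
      have hexp : Hp (m + 2) = X * Hp (m + 1) - C ((m + 1 : ℕ) : ℝ) * Hp m := by
        rw [Hp_succ (m + 1), derivative_Hp (m + 1), Nat.add_sub_cancel]
      rw [hexp]
      have h1 : ∀ z : ℝ, (X * Hp (m+1) - C ((m+1:ℕ) : ℝ) * Hp m).eval (a * x + b * z)
            * Real.exp (-(z ^ 2 / 2))
          = a * x * ((Hp (m+1)).eval (a * x + b * z) * Real.exp (-(z ^ 2 / 2)))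
            + b * (z * (Hp (m+1)).eval (a * x + b * z) * Real.exp (-(z ^ 2 / 2)))
            - ((m+1:ℕ) : ℝ) * ((Hp m).eval (a * x + b * z) * Real.exp (-(z ^ 2 / 2))) := by
        intro z; simp only [eval_sub, eval_mul, eval_X, eval_C]; ring
      simp_rw [h1]
      have iA : Integrable fun z : ℝ =>
          a * x * ((Hp (m+1)).eval (a * x + b * z) * Real.exp (-(z ^ 2 / 2))) :=
        (int_affine _ _ _).const_mul _
      have iB : Integrable fun z : ℝ =>
          b * (z * (Hp (m+1)).eval (a * x + b * z) * Real.exp (-(z ^ 2 / 2))) := by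
        have := (int_affine ((Hp (m+1)).comp (C (a*x) + C b * X) * X) 0 1)
        have h2 : Integrable fun z : ℝ =>
            z * (Hp (m+1)).eval (a * x + b * z) * Real.exp (-(z ^ 2 / 2)) := by
          have h3 := integrable_poly_gaussian (X * (Hp (m+1)).comp (C (a*x) + C b * X))
          simp only [eval_mul, eval_X, eval_comp, eval_add, eval_C] at h3
          simpa [mul_assoc] using h3
        exact h2.const_mul b
      have iC : Integrable fun z : ℝ =>
          ((m+1:ℕ) : ℝ) * ((Hp m).eval (a * x + b * z) * Real.exp (-(z ^ 2 / 2))) :=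
        (int_affine _ _ _).const_mul _
      have iAB : Integrable fun z : ℝ =>
          a * x * ((Hp (m+1)).eval (a * x + b * z) * Real.exp (-(z ^ 2 / 2)))
            + b * (z * (Hp (m+1)).eval (a * x + b * z) * Real.exp (-(z ^ 2 / 2))) := by
        exact iA.add iB
      rw [integral_sub iAB iC, integral_add iA iB,
        MeasureTheory.integral_const_mul, MeasureTheory.integral_const_mul,
        MeasureTheory.integral_const_mul, ibp_affine (Hp (m+1)) (a*x) b,
        derivative_Hp (m+1), Nat.add_sub_cancel]
      have h4 : ∀ z : ℝ, (C ((m+1:ℕ) : ℝ) * Hp m).eval (a * x + b * z)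
            * Real.exp (-(z ^ 2 / 2))
          = ((m+1:ℕ) : ℝ) * ((Hp m).eval (a * x + b * z) * Real.exp (-(z ^ 2 / 2))) := by
        intro z; simp only [eval_mul, eval_C]; ring
      simp_rw [h4]
      rw [MeasureTheory.integral_const_mul, ih1, ih0]
      simp only [eval_sub, eval_mul, eval_X, eval_C]
      linear_combination (((m+1:ℕ) : ℝ) * Real.sqrt (2*π) * a ^ m * (Hp m).eval x) * hab



/-- Orthogonality of probabilists' Hermite polynomials against the centered bivariate Gaussian
density with unit variances and correlation `r`:
`∫ He_k(x) He_j(y) (2π√(1−r²))⁻¹ exp(−(x² − 2rxy + y²)/(2(1−r²))) dx dy = δ_{kj} k! r^k`. -/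
theorem hermite_bivariate_gaussian_orthogonality (r : ℝ) (hr : |r| < 1) (k j : ℕ) :
    ∫ p : ℝ × ℝ,
        (Polynomial.aeval p.1 (Polynomial.hermite k)) *
          (Polynomial.aeval p.2 (Polynomial.hermite j)) *
          ((2 * π * Real.sqrt (1 - r ^ 2))⁻¹ *
            Real.exp (-(p.1 ^ 2 - 2 * r * p.1 * p.2 + p.2 ^ 2) / (2 * (1 - r ^ 2)))) =
      if k = j then (Nat.factorial k : ℝ) * r ^ k else 0 := by
  have h1r : (0:ℝ) < 1 - r ^ 2 := by
    have h2 : r ^ 2 < 1 := by rw [← sq_abs]; nlinarith [abs_nonneg r]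
    linarith
  set s := Real.sqrt (1 - r ^ 2) with hs_def
  have hs : 0 < s := Real.sqrt_pos.2 h1r
  have hs2 : s ^ 2 = 1 - r ^ 2 := Real.sq_sqrt h1r.le
  have hπ : (0:ℝ) < 2 * π * s := by positivity
  have hab : r ^ 2 + s ^ 2 = 1 := by rw [hs2]; ring
  -- pointwise rewriting of the integrand
  have hpt : ∀ p : ℝ × ℝ,
      (Polynomial.aeval p.1 (Polynomial.hermite k)) *
          (Polynomial.aeval p.2 (Polynomial.hermite j)) *
          ((2 * π * s)⁻¹ *
            Real.exp (-(p.1 ^ 2 - 2 * r * p.1 * p.2 + p.2 ^ 2) / (2 * (1 - r ^ 2))))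
      = (2 * π * s)⁻¹ *
          (((Hp k).eval p.1 * Real.exp (-(p.1 ^ 2 / 2))) *
            ((Hp j).eval p.2 * Real.exp (-((p.2 - r * p.1) ^ 2 / (2 * s ^ 2))))) := by
    intro p
    rw [aeval_hermite_eq, aeval_hermite_eq,
      show -(p.1 ^ 2 - 2 * r * p.1 * p.2 + p.2 ^ 2) / (2 * (1 - r ^ 2))
          = -(p.1 ^ 2 / 2) + -((p.2 - r * p.1) ^ 2 / (2 * s ^ 2)) by
        rw [hs2]; field_simp; ring,
      Real.exp_add]
    ring
  simp_rw [hpt]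
  -- joint integrability
  have hc : (0:ℝ) < 1 / (2 * (1 + |r|)) := by positivity
  set c := 1 / (2 * (1 + |r|)) with hc_def
  have hGk : Integrable fun x : ℝ => |(Hp k).eval x * Real.exp (-c * x ^ 2)| :=
    (integrable_poly_gauss hc _).abs
  have hGj : Integrable fun y : ℝ => |(Hp j).eval y * Real.exp (-c * y ^ 2)| :=
    (integrable_poly_gauss hc _).abs
  have hprod : Integrable (fun p : ℝ × ℝ =>
      |(Hp k).eval p.1 * Real.exp (-c * p.1 ^ 2)| *
        |(Hp j).eval p.2 * Real.exp (-c * p.2 ^ 2)|) := by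
    rw [MeasureTheory.Measure.volume_eq_prod]
    exact hGk.mul_prod hGj
  have habs2 : ∀ x y : ℝ, 2 * (r * (x * y)) ≤ |r| * (x ^ 2 + y ^ 2) := by
    intro x y
    calc 2 * (r * (x * y)) ≤ |2 * (r * (x * y))| := le_abs_self _
      _ = |r| * (2 * (|x| * |y|)) := by
          rw [abs_mul, abs_mul, abs_mul, abs_two]; ring
      _ ≤ |r| * (x ^ 2 + y ^ 2) := by
          apply mul_le_mul_of_nonneg_left _ (abs_nonneg r)
          nlinarith [sq_nonneg (|x| - |y|), sq_abs x, sq_abs y]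
  have hquad : ∀ x y : ℝ, x ^ 2 / 2 + (y - r * x) ^ 2 / (2 * s ^ 2)
      = (x ^ 2 - 2 * r * x * y + y ^ 2) / (2 * (1 - r ^ 2)) := by
    intro x y; rw [hs2]; field_simp; ring
  have key : ∀ x y : ℝ, c * x ^ 2 + c * y ^ 2 ≤ x ^ 2 / 2 + (y - r * x) ^ 2 / (2 * s ^ 2) := by
    intro x y
    rw [hquad x y, le_div_iff₀ (by linarith : (0:ℝ) < 2 * (1 - r ^ 2))]
    have e1 : (c * x ^ 2 + c * y ^ 2) * (2 * (1 - r ^ 2)) = (1 - |r|) * (x ^ 2 + y ^ 2) := by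
      rw [hc_def]; field_simp; rw [← sq_abs r]; ring
    rw [e1]
    nlinarith [habs2 x y]
  have hexpb : ∀ x y : ℝ,
      Real.exp (-(x ^ 2 / 2)) * Real.exp (-((y - r * x) ^ 2 / (2 * s ^ 2)))
        ≤ Real.exp (-c * x ^ 2) * Real.exp (-c * y ^ 2) := by
    intro x y
    rw [← Real.exp_add, ← Real.exp_add]
    apply Real.exp_le_exp.2
    have := key x y
    linarith
  have hcont : Continuous (fun p : ℝ × ℝ => (2 * π * s)⁻¹ *
      (((Hp k).eval p.1 * Real.exp (-(p.1 ^ 2 / 2))) *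
        ((Hp j).eval p.2 * Real.exp (-((p.2 - r * p.1) ^ 2 / (2 * s ^ 2)))))) := by
    apply Continuous.mul continuous_const
    apply Continuous.mul
    · exact (((Hp k).continuous).comp continuous_fst).mul (by fun_prop)
    · exact (((Hp j).continuous).comp continuous_snd).mul (by fun_prop)
  have hint : Integrable (fun p : ℝ × ℝ => (2 * π * s)⁻¹ *
      (((Hp k).eval p.1 * Real.exp (-(p.1 ^ 2 / 2))) *
        ((Hp j).eval p.2 * Real.exp (-((p.2 - r * p.1) ^ 2 / (2 * s ^ 2)))))) := by
    refine Integrable.mono' (hprod.const_mul ((2 * π * s)⁻¹)) hcont.aestronglyMeasurable ?_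
    filter_upwards with p
    rw [Real.norm_eq_abs, abs_mul, abs_of_pos (inv_pos.2 hπ)]
    apply mul_le_mul_of_nonneg_left _ (inv_pos.2 hπ).le
    calc |(Hp k).eval p.1 * Real.exp (-(p.1 ^ 2 / 2)) *
            ((Hp j).eval p.2 * Real.exp (-((p.2 - r * p.1) ^ 2 / (2 * s ^ 2))))|
        = (|(Hp k).eval p.1| * |(Hp j).eval p.2|) *
            (Real.exp (-(p.1 ^ 2 / 2)) * Real.exp (-((p.2 - r * p.1) ^ 2 / (2 * s ^ 2)))) := by
          rw [abs_mul, abs_mul, abs_mul, abs_of_pos (Real.exp_pos _),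
            abs_of_pos (Real.exp_pos _)]
          ring
      _ ≤ (|(Hp k).eval p.1| * |(Hp j).eval p.2|) *
            (Real.exp (-c * p.1 ^ 2) * Real.exp (-c * p.2 ^ 2)) :=
          mul_le_mul_of_nonneg_left (hexpb p.1 p.2) (by positivity)
      _ = |(Hp k).eval p.1 * Real.exp (-c * p.1 ^ 2)| *
            |(Hp j).eval p.2 * Real.exp (-c * p.2 ^ 2)| := by
          rw [abs_mul, abs_mul, abs_of_pos (Real.exp_pos _), abs_of_pos (Real.exp_pos _)]
          ring
  rw [MeasureTheory.Measure.volume_eq_prod] at hint ⊢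
  rw [MeasureTheory.integral_prod _ hint]
  -- inner integral
  have inner : ∀ x : ℝ,
      (∫ y : ℝ, (2 * π * s)⁻¹ *
        (((Hp k).eval x * Real.exp (-(x ^ 2 / 2))) *
          ((Hp j).eval y * Real.exp (-((y - r * x) ^ 2 / (2 * s ^ 2))))))
      = (2 * π * s)⁻¹ * (((Hp k).eval x * Real.exp (-(x ^ 2 / 2))) *
          (s * (Real.sqrt (2 * π) * r ^ j * (Hp j).eval x))) := by
    intro x
    rw [MeasureTheory.integral_const_mul, MeasureTheory.integral_const_mul]
    congr 2
    have ht : (∫ y : ℝ, (Hp j).eval y * Real.exp (-((y - r * x) ^ 2 / (2 * s ^ 2))))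
        = ∫ y : ℝ, (Hp j).eval (y + r * x) * Real.exp (-(y ^ 2 / (2 * s ^ 2))) := by
      rw [← MeasureTheory.integral_add_right_eq_self
        (fun y : ℝ => (Hp j).eval y * Real.exp (-((y - r * x) ^ 2 / (2 * s ^ 2)))) (r * x)]
      congr 1
      funext y
      simp [add_sub_cancel_right]
    rw [ht]
    have h6 := MeasureTheory.Measure.integral_comp_mul_left
      (fun y : ℝ => (Hp j).eval (y + r * x) * Real.exp (-(y ^ 2 / (2 * s ^ 2)))) s
    rw [abs_of_pos (inv_pos.2 hs), smul_eq_mul] at h6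
    have h7 : (∫ y : ℝ, (Hp j).eval (y + r * x) * Real.exp (-(y ^ 2 / (2 * s ^ 2))))
        = s * ∫ z : ℝ, (Hp j).eval (s * z + r * x) *
            Real.exp (-((s * z) ^ 2 / (2 * s ^ 2))) := by
      rw [h6]
      field_simp
    rw [h7]
    have h8 : ∀ z : ℝ, (Hp j).eval (s * z + r * x) * Real.exp (-((s * z) ^ 2 / (2 * s ^ 2)))
        = (Hp j).eval (r * x + s * z) * Real.exp (-(z ^ 2 / 2)) := by
      intro z
      rw [show (s * z) ^ 2 / (2 * s ^ 2) = z ^ 2 / 2 by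
        field_simp, add_comm (s * z) (r * x)]
    simp_rw [h8]
    rw [affine_Hp hab x j]
  simp_rw [inner]
  simp_rw [show ∀ x : ℝ, (2 * π * s)⁻¹ * (((Hp k).eval x * Real.exp (-(x ^ 2 / 2))) *
        (s * (Real.sqrt (2 * π) * r ^ j * (Hp j).eval x)))
      = ((2 * π * s)⁻¹ * s * (Real.sqrt (2 * π) * r ^ j)) *
          ((Hp k).eval x * (Hp j).eval x * Real.exp (-(x ^ 2 / 2))) from fun x => by ring]
  rw [MeasureTheory.integral_const_mul, orth_Hp j k]
  by_cases hkj : k = j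
  · subst hkj
    rw [if_pos rfl, if_pos rfl]
    have hsq : Real.sqrt (2 * π) * Real.sqrt (2 * π) = 2 * π :=
      Real.mul_self_sqrt (by positivity)
    have hπ0 : (2 : ℝ) * π ≠ 0 := by positivity
    have h9 : (2 * π * s)⁻¹ * s * (Real.sqrt (2 * π) * r ^ k) *
        ((k.factorial : ℝ) * Real.sqrt (2 * π))
        = (k.factorial : ℝ) * r ^ k * ((2 * π * s)⁻¹ * s * (2 * π)) := by
      linear_combination ((2 * π * s)⁻¹ * s * r ^ k * (k.factorial : ℝ)) * hsq
    have h10 : (2 * π * s)⁻¹ * s * (2 * π) = 1 := by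
      calc (2 * π * s)⁻¹ * s * (2 * π) = (2 * π * s)⁻¹ * (2 * π * s) := by ring
        _ = 1 := inv_mul_cancel₀ hπ.ne'
    rw [h9, h10, mul_one]
  · rw [if_neg hkj, if_neg hkj, mul_zero]
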